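/- π² = 4 ln²(1 + √2) + 8 ∫_{ln(1+√2)}^{∞} arccosh(coth x) dx, where coth x = cosh x / sinh x and arccosh is the inverse hyperbolic cosine; the improper integral converges. -/

import Mathlib

open Real MeasureTheory Set

/-- The inverse hyperbolic cosine: arccosh y = ln(y + √(y² - 1)) for y ≥ 1. -/
noncomputable def arcosh (y : ℝ) : ℝ := Real.log (y + Real.sqrt (y ^ 2 - 1))

namespace PiSqAux


lemma sq_sqrt_sub_one {y : ℝ} (hy : 1 ≤ y) : Real.sqrt (y ^ 2 - 1) ^ 2 = y ^ 2 - 1 := by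
  rw [Real.sq_sqrt]; nlinarith

lemma core_pos {y : ℝ} (hy : 1 ≤ y) : 0 < y + Real.sqrt (y ^ 2 - 1) := by
  have := Real.sqrt_nonneg (y ^ 2 - 1); linarith

lemma exp_neg_arcosh {y : ℝ} (hy : 1 ≤ y) :
    Real.exp (-(_root_.arcosh y)) = y - Real.sqrt (y ^ 2 - 1) := by
  have hz := core_pos hy
  have hs := sq_sqrt_sub_one hy
  rw [_root_.arcosh, Real.exp_neg, Real.exp_log hz]
  exact inv_eq_of_mul_eq_one_right (by nlinarith)

lemma cosh_arcosh {y : ℝ} (hy : 1 ≤ y) : Real.cosh (_root_.arcosh y) = y := by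
  have hz := core_pos hy
  have hs := sq_sqrt_sub_one hy
  rw [Real.cosh_eq, exp_neg_arcosh hy, _root_.arcosh, Real.exp_log hz]
  ring

lemma sinh_arcosh {y : ℝ} (hy : 1 ≤ y) :
    Real.sinh (_root_.arcosh y) = Real.sqrt (y ^ 2 - 1) := by
  have hz := core_pos hy
  rw [Real.sinh_eq, exp_neg_arcosh hy, _root_.arcosh, Real.exp_log hz]
  ring

lemma arcosh_cosh {x : ℝ} (hx : 0 ≤ x) : _root_.arcosh (Real.cosh x) = x := by
  have h1 : Real.cosh x ^ 2 - 1 = Real.sinh x ^ 2 := by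
    have := Real.cosh_sq_sub_sinh_sq x; linarith
  have hs : 0 ≤ Real.sinh x := by
    rcases hx.eq_or_lt with h | h
    · simp [← h]
    · exact (Real.sinh_pos_iff.mpr h).le
  rw [_root_.arcosh, h1, Real.sqrt_sq hs, Real.cosh_add_sinh, Real.log_exp]

lemma arcosh_strictMonoOn : StrictMonoOn _root_.arcosh (Set.Ici 1) := by
  intro u hu v hv huv
  have hu1 : (1:ℝ) ≤ u := hu
  have hv1 : (1:ℝ) ≤ v := hv
  apply Real.log_lt_log (core_pos hu1)
  have : Real.sqrt (u ^ 2 - 1) ≤ Real.sqrt (v ^ 2 - 1) := by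
    apply Real.sqrt_le_sqrt; nlinarith
  linarith

noncomputable def f (x : ℝ) : ℝ := _root_.arcosh (Real.cosh x / Real.sinh x)

lemma one_lt_coth {x : ℝ} (hx : 0 < x) : 1 < Real.cosh x / Real.sinh x :=
  (one_lt_div (Real.sinh_pos_iff.mpr hx)).mpr (Real.sinh_lt_cosh x)

lemma f_pos {x : ℝ} (hx : 0 < x) : 0 < f x := by
  have h := one_lt_coth hx
  have := Real.sqrt_nonneg ((Real.cosh x / Real.sinh x) ^ 2 - 1)
  exact Real.log_pos (by linarith)

lemma cosh_f {x : ℝ} (hx : 0 < x) : Real.cosh (f x) = Real.cosh x / Real.sinh x :=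
  cosh_arcosh (one_lt_coth hx).le

lemma coth_sq_sub_one {x : ℝ} (hx : 0 < x) :
    (Real.cosh x / Real.sinh x) ^ 2 - 1 = (Real.sinh x)⁻¹ ^ 2 := by
  have hs := Real.sinh_pos_iff.mpr hx
  have hc := Real.cosh_sq_sub_sinh_sq x
  field_simp
  linarith

lemma sinh_f {x : ℝ} (hx : 0 < x) : Real.sinh (f x) = (Real.sinh x)⁻¹ := by
  have hs := Real.sinh_pos_iff.mpr hx
  rw [f, sinh_arcosh (one_lt_coth hx).le, coth_sq_sub_one hx,
    Real.sqrt_sq (by positivity)]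

lemma f_invol {x : ℝ} (hx : 0 < x) : f (f x) = x := by
  have hs := (Real.sinh_pos_iff.mpr hx).ne'
  have : Real.cosh x / Real.sinh x / (Real.sinh x)⁻¹ = Real.cosh x := by
    field_simp
  rw [f, cosh_f hx, sinh_f hx, this, arcosh_cosh hx.le]

lemma f_anti : StrictAntiOn f (Set.Ioi 0) := by
  intro u hu v hv huv
  have hu0 : (0:ℝ) < u := hu
  have hv0 : (0:ℝ) < v := hv
  have hsu := Real.sinh_pos_iff.mpr hu0
  have hsv := Real.sinh_pos_iff.mpr hv0
  have hcoth : Real.cosh v / Real.sinh v < Real.cosh u / Real.sinh u := by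
    rw [div_lt_div_iff₀ hsv hsu]
    have h1 : 0 < Real.sinh (v - u) := Real.sinh_pos_iff.mpr (by linarith)
    rw [Real.sinh_sub] at h1
    linarith
  exact arcosh_strictMonoOn (Set.mem_Ici.mpr (one_lt_coth hv0).le)
    (Set.mem_Ici.mpr (one_lt_coth hu0).le) hcoth

lemma key_iff {x t : ℝ} (hx : 0 < x) (ht : 0 < t) : t < f x ↔ x < f t := by
  have h1 : f t ∈ Set.Ioi (0:ℝ) := f_pos ht
  have h2 : x ∈ Set.Ioi (0:ℝ) := hx
  constructor
  · intro h
    by_contra hc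
    push_neg at hc
    rcases hc.eq_or_lt with h' | h'
    · rw [← h', f_invol ht] at h; exact lt_irrefl _ h
    · have := f_anti h1 h2 h'
      rw [f_invol ht] at this
      exact absurd h (not_lt.mpr this.le)
  · intro h
    have := f_anti h2 h1 h
    rwa [f_invol ht] at this


noncomputable def a : ℝ := Real.log (1 + Real.sqrt 2)

lemma sqrt2_pos : (0:ℝ) < Real.sqrt 2 := Real.sqrt_pos.mpr two_pos

lemma a_pos : 0 < a := Real.log_pos (by linarith [sqrt2_pos])

lemma sinh_a : Real.sinh a = 1 := by
  have h2 : Real.sqrt 2 ^ 2 = 2 := Real.sq_sqrt two_pos.le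
  have hz : (0:ℝ) < 1 + Real.sqrt 2 := by linarith [sqrt2_pos]
  have hinv : (1 + Real.sqrt 2)⁻¹ = Real.sqrt 2 - 1 :=
    inv_eq_of_mul_eq_one_right (by nlinarith)
  rw [a, Real.sinh_eq, Real.exp_neg, Real.exp_log hz, hinv]
  ring

lemma cosh_a : Real.cosh a = Real.sqrt 2 := by
  have h2 : Real.sqrt 2 ^ 2 = 2 := Real.sq_sqrt two_pos.le
  have hz : (0:ℝ) < 1 + Real.sqrt 2 := by linarith [sqrt2_pos]
  have hinv : (1 + Real.sqrt 2)⁻¹ = Real.sqrt 2 - 1 :=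
    inv_eq_of_mul_eq_one_right (by nlinarith)
  rw [a, Real.cosh_eq, Real.exp_neg, Real.exp_log hz, hinv]
  ring

lemma f_fixed : f a = a := by
  have h2 : Real.sqrt 2 ^ 2 = 2 := Real.sq_sqrt two_pos.le
  rw [f, cosh_a, sinh_a, div_one, _root_.arcosh]
  have : Real.sqrt 2 ^ 2 - 1 = 1 := by rw [h2]; norm_num
  rw [this, Real.sqrt_one, a, add_comm]

/-- The logarithmic form of `f`. -/
lemma f_eq_log {x : ℝ} (hx : 0 < x) :
    f x = Real.log (1 + Real.exp (-x)) - Real.log (1 - Real.exp (-x)) := by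
  have hs := Real.sinh_pos_iff.mpr hx
  have ht0 : 0 < Real.exp (-x) := Real.exp_pos _
  have ht1 : Real.exp (-x) < 1 := Real.exp_lt_one_iff.mpr (by linarith)
  have h1 : f x = Real.log ((Real.cosh x + 1) / Real.sinh x) := by
    rw [f, _root_.arcosh, coth_sq_sub_one hx, Real.sqrt_sq (by positivity)]
    congr 1
    field_simp
  have h2 : (Real.cosh x + 1) / Real.sinh x
      = (1 + Real.exp (-x)) / (1 - Real.exp (-x)) := by
    rw [div_eq_div_iff hs.ne' (by linarith)]
    rw [Real.cosh_eq, Real.sinh_eq, Real.exp_neg]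
    have he := Real.exp_pos x
    field_simp
    ring
  rw [h1, h2, Real.log_div (by linarith) (by linarith)]

noncomputable def c (n : ℕ) : ℝ := (1 + (-1) ^ n) / (n + 1)
noncomputable def g (n : ℕ) (x : ℝ) : ℝ := c n * Real.exp (-((n : ℝ) + 1) * x)

lemma c_nonneg (n : ℕ) : 0 ≤ c n := by
  rcases Nat.even_or_odd n with h | h
  · rw [c, h.neg_one_pow]; positivity
  · rw [c, h.neg_one_pow]; norm_num

lemma g_nonneg (n : ℕ) (x : ℝ) : 0 ≤ g n x := mul_nonneg (c_nonneg n) (Real.exp_pos _).le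

lemma f_hasSum {x : ℝ} (hx : 0 < x) : HasSum (fun n => g n x) (f x) := by
  set t := Real.exp (-x) with ht
  have ht0 : 0 < t := Real.exp_pos _
  have ht1 : t < 1 := Real.exp_lt_one_iff.mpr (by linarith)
  have habs : |t| < 1 := by rw [abs_of_pos ht0]; exact ht1
  have habs' : |(-t)| < 1 := by rwa [abs_neg]
  have h1 := Real.hasSum_pow_div_log_of_abs_lt_one habs
  have h2 := Real.hasSum_pow_div_log_of_abs_lt_one habs'
  rw [sub_neg_eq_add] at h2
  have h3 := h1.sub h2
  have hval : -Real.log (1 - t) - -Real.log (1 + t) = f x := by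
    rw [f_eq_log hx]; ring
  rw [hval] at h3
  convert h3 using 2 with n
  · rfl
  have hexp : Real.exp (-((n : ℝ) + 1) * x) = t ^ (n + 1) := by
    rw [ht, ← Real.exp_nat_mul]
    congr 1
    push_cast
    ring
  rw [g, hexp, c]
  rcases Nat.even_or_odd n with h | h
  · have : (-t) ^ (n+1) = -t^(n+1) := by
      rw [neg_pow]
      simp [Nat.even_add_one, h, h.neg_one_pow]
    rw [this, h.neg_one_pow]
    ring
  · have : (-t) ^ (n+1) = t^(n+1) := by
      rw [neg_pow]
      simp [Nat.even_add_one, h, h.neg_one_pow]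
    rw [this, h.neg_one_pow]
    ring

lemma hasSum_odd_sq : HasSum (fun k : ℕ => (1:ℝ) / (2 * (k:ℝ) + 1) ^ 2) (π ^ 2 / 8) := by
  have hz := hasSum_zeta_two
  have heven : HasSum (fun k : ℕ => (1:ℝ) / ((2 * k : ℕ) : ℝ) ^ 2) (π ^ 2 / 24) := by
    have h := hz.mul_left (1/4)
    have he : (fun n : ℕ => (1/4 : ℝ) * (1 / (n:ℝ) ^ 2))
        = fun k : ℕ => (1:ℝ) / ((2 * k : ℕ) : ℝ) ^ 2 := by
      funext k
      push_cast
      rw [eq_comm, mul_pow, one_div, one_div, one_div, mul_inv]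
      norm_num
    rw [he] at h
    convert h using 1
    · rfl
    ring
  have hsummable : Summable (fun k : ℕ => (1:ℝ) / (2 * (k:ℝ) + 1) ^ 2) := by
    have hs2 : Summable (fun k : ℕ => (1:ℝ) / ((k:ℝ) + 1) ^ 2) := by
      have h := hz.summable.comp_injective (add_left_injective 1)
      have he : ((fun n : ℕ => (1:ℝ) / (n:ℝ) ^ 2) ∘ (· + 1))
          = fun k : ℕ => (1:ℝ) / ((k:ℝ) + 1) ^ 2 := by
        funext k
        simp only [Function.comp]
        push_cast
        ring_nf
      rwa [he] at h
    apply Summable.of_nonneg_of_le (fun k => by positivity) _ hs2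
    intro k
    apply div_le_div_of_nonneg_left one_pos.le (by positivity)
    nlinarith [Nat.cast_nonneg (α := ℝ) k]
  have hodd := hsummable.hasSum
  set O := ∑' k : ℕ, (1:ℝ) / (2 * (k:ℝ) + 1) ^ 2 with hOdef
  have hodd' : HasSum (fun k : ℕ => (1:ℝ) / ((2 * k + 1 : ℕ) : ℝ) ^ 2) O := by
    have he : (fun k : ℕ => (1:ℝ) / ((2 * k + 1 : ℕ) : ℝ) ^ 2)
        = fun k : ℕ => (1:ℝ) / (2 * (k:ℝ) + 1) ^ 2 := by
      funext k; push_cast; ring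
    rw [he]; exact hodd
  have htot := HasSum.even_add_odd (f := fun n : ℕ => (1:ℝ) / (n:ℝ) ^ 2) heven hodd'
  have huni : π ^ 2 / 24 + O = π ^ 2 / 6 := htot.unique hz
  have hO : O = π ^ 2 / 8 := by linarith
  rwa [hO] at hodd

lemma hasSum_d : HasSum (fun n : ℕ => c n / ((n : ℝ) + 1)) (π ^ 2 / 4) := by
  have hodd := hasSum_odd_sq
  have heven : HasSum (fun k : ℕ => c (2 * k) / (((2 * k : ℕ) : ℝ) + 1)) (π ^ 2 / 4) := by
    have h := hodd.mul_left 2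
    have he : (fun k : ℕ => (2:ℝ) * (1 / (2 * (k:ℝ) + 1) ^ 2))
        = fun k : ℕ => c (2 * k) / (((2 * k : ℕ) : ℝ) + 1) := by
      funext k
      rw [c, pow_mul]
      push_cast
      norm_num
      rw [div_div]
      ring_nf
    rw [he] at h
    convert h using 1
    · rfl
    ring
  have hoddz : HasSum (fun k : ℕ => c (2 * k + 1) / (((2 * k + 1 : ℕ) : ℝ) + 1)) 0 := by
    have he : (fun k : ℕ => c (2 * k + 1) / (((2 * k + 1 : ℕ) : ℝ) + 1)) = fun _ => (0:ℝ) := by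
      funext k
      rw [c, pow_succ, pow_mul]
      norm_num
    rw [he]
    exact hasSum_zero
  have h := HasSum.even_add_odd (f := fun n : ℕ => c n / ((n : ℝ) + 1)) heven hoddz
  rwa [add_zero] at h

lemma d_nonneg (n : ℕ) : 0 ≤ c n / ((n:ℝ) + 1) := by
  rcases Nat.even_or_odd n with h | h
  · rw [c, h.neg_one_pow]; positivity
  · rw [c, h.neg_one_pow]; norm_num

lemma g_integrableOn (n : ℕ) : IntegrableOn (g n) (Set.Ioi 0) := by
  have h := (exp_neg_integrableOn_Ioi 0 (b := (n:ℝ) + 1) (by positivity))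
  exact h.const_mul (c n)

lemma g_integral (n : ℕ) : ∫ x in Set.Ioi (0:ℝ), g n x = c n / ((n:ℝ) + 1) := by
  have hb : (0:ℝ) < (n:ℝ) + 1 := by positivity
  have h1 : ∫ x in Set.Ioi (0:ℝ), Real.exp (-(((n:ℝ) + 1) * x)) = ((n:ℝ)+1)⁻¹ := by
    have := integral_comp_mul_left_Ioi (fun y => Real.exp (-y)) 0 hb
    rw [mul_zero] at this
    rw [this, integral_exp_neg_Ioi, neg_zero, Real.exp_zero, smul_eq_mul, mul_one]
  have h2 : (fun x : ℝ => g n x) = fun x => c n * Real.exp (-(((n:ℝ) + 1) * x)) := by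
    funext x; rw [g, neg_mul]
  rw [h2, MeasureTheory.integral_const_mul, h1, div_eq_mul_inv]

lemma f_measurable : Measurable f := by
  unfold f _root_.arcosh
  apply Real.measurable_log.comp
  apply Measurable.add
  · exact (Real.measurable_cosh.div Real.measurable_sinh)
  · exact Real.continuous_sqrt.measurable.comp
      (((Real.measurable_cosh.div Real.measurable_sinh).pow_const 2).sub measurable_const)

lemma key_lintegral :
    ∫⁻ x in Set.Ioi (0:ℝ), ENNReal.ofReal (f x) = ENNReal.ofReal (π ^ 2 / 4) := by
  have hstep : ∀ x ∈ Set.Ioi (0:ℝ),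
      ENNReal.ofReal (f x) = ∑' n, ENNReal.ofReal (g n x) := by
    intro x hx
    rw [← (f_hasSum hx).tsum_eq,
      ENNReal.ofReal_tsum_of_nonneg (fun n => g_nonneg n x) (f_hasSum hx).summable]
  rw [setLIntegral_congr_fun measurableSet_Ioi hstep]
  have hgmeas : ∀ n : ℕ, Measurable fun x => ENNReal.ofReal (g n x) := by
    intro n
    exact (measurable_const.mul (Real.measurable_exp.comp
      (measurable_const.mul measurable_id))).ennreal_ofReal
  rw [lintegral_tsum (fun n => (hgmeas n).aemeasurable)]
  have hterm : ∀ n : ℕ, ∫⁻ x in Set.Ioi (0:ℝ), ENNReal.ofReal (g n x)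
      = ENNReal.ofReal (c n / ((n:ℝ) + 1)) := by
    intro n
    rw [← MeasureTheory.ofReal_integral_eq_lintegral_ofReal (g_integrableOn n)
      (Filter.Eventually.of_forall (fun x => g_nonneg n x)), g_integral n]
  simp_rw [hterm]
  rw [← ENNReal.ofReal_tsum_of_nonneg d_nonneg hasSum_d.summable, hasSum_d.tsum_eq]
lemma f_nonneg_ae : 0 ≤ᵐ[volume.restrict (Set.Ioi (0:ℝ))] f := by
  rw [Filter.EventuallyLE, ae_restrict_iff' measurableSet_Ioi]
  exact Filter.Eventually.of_forall (fun x hx => (f_pos hx).le)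

lemma f_integrableOn_Ioi0 : IntegrableOn f (Set.Ioi 0) := by
  refine ⟨f_measurable.aestronglyMeasurable, ?_⟩
  rw [hasFiniteIntegral_iff_ofReal f_nonneg_ae, key_lintegral]
  exact ENNReal.ofReal_lt_top

lemma f_integral_Ioi0 : ∫ x in Set.Ioi (0:ℝ), f x = π ^ 2 / 4 := by
  rw [integral_eq_lintegral_of_nonneg_ae f_nonneg_ae f_measurable.aestronglyMeasurable,
    key_lintegral, ENNReal.toReal_ofReal (by positivity)]

lemma f_integrableOn_Ioia : IntegrableOn f (Set.Ioi a) :=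
  f_integrableOn_Ioi0.mono_set (Set.Ioi_subset_Ioi a_pos.le)

lemma f_lt_a {x : ℝ} (hx : a < x) : f x < a := by
  have := f_anti (Set.mem_Ioi.mpr a_pos) (Set.mem_Ioi.mpr (a_pos.trans hx)) hx
  rwa [f_fixed] at this

lemma a_lt_f {t : ℝ} (ht : 0 < t) (hta : t < a) : a < f t := by
  have := f_anti (Set.mem_Ioi.mpr ht) (Set.mem_Ioi.mpr a_pos) hta
  rwa [f_fixed] at this

lemma layercake : ∫ x in Set.Ioi a, f x = (∫ t in Set.Ioo 0 a, f t) - a * a := by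
  have hnn : 0 ≤ᵐ[volume.restrict (Set.Ioi a)] f := by
    rw [Filter.EventuallyLE, ae_restrict_iff' measurableSet_Ioi]
    exact Filter.Eventually.of_forall (fun x hx => (f_pos (a_pos.trans hx)).le)
  rw [MeasureTheory.Integrable.integral_eq_integral_meas_lt f_integrableOn_Ioia hnn]
  have hmeas : ∀ t ∈ Set.Ioi (0:ℝ),
      ((volume.restrict (Set.Ioi a)) {x | t < f x}).toReal
        = (Set.Ioo (0:ℝ) a).indicator (fun t => f t - a) t := by
    intro t ht
    have ht0 : (0:ℝ) < t := ht
    rw [Measure.restrict_apply' measurableSet_Ioi]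
    rcases lt_or_ge t a with hta | hta
    · have hset : {x | t < f x} ∩ Set.Ioi a = Set.Ioo a (f t) := by
        ext x
        simp only [Set.mem_inter_iff, Set.mem_setOf_eq, Set.mem_Ioi, Set.mem_Ioo]
        constructor
        · rintro ⟨h1, h2⟩
          exact ⟨h2, (key_iff (a_pos.trans h2) ht0).mp h1⟩
        · rintro ⟨h1, h2⟩
          exact ⟨(key_iff (a_pos.trans h1) ht0).mpr h2, h1⟩
      rw [hset, Real.volume_Ioo,
        Set.indicator_of_mem (Set.mem_Ioo.mpr ⟨ht0, hta⟩),
        ENNReal.toReal_ofReal (by linarith [a_lt_f ht0 hta])]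
    · have hset : {x | t < f x} ∩ Set.Ioi a = ∅ := by
        ext x
        simp only [Set.mem_inter_iff, Set.mem_setOf_eq, Set.mem_Ioi, Set.mem_empty_iff_false,
          iff_false, not_and]
        intro h1 h2
        exact absurd h1 (not_lt.mpr ((f_lt_a h2).le.trans hta))
      rw [hset, Set.indicator_of_notMem (by simp [Set.mem_Ioo]; intro h; linarith)]
      simp
  simp only [measureReal_def]
  rw [setIntegral_congr_fun measurableSet_Ioi hmeas]
  rw [integral_indicator measurableSet_Ioo, Measure.restrict_restrict measurableSet_Ioo,
    Set.inter_eq_left.mpr Set.Ioo_subset_Ioi_self]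
  have hconst : IntegrableOn (fun _ : ℝ => a) (Set.Ioo 0 a) := by
    apply (integrableOn_const_iff (by finiteness)).mpr
    right
    rw [Real.volume_Ioo]
    exact ENNReal.ofReal_lt_top
  rw [integral_sub (f_integrableOn_Ioi0.mono_set Set.Ioo_subset_Ioi_self) hconst,
    setIntegral_const, measureReal_def, Real.volume_Ioo, sub_zero, ENNReal.toReal_ofReal a_pos.le,
    smul_eq_mul]

theorem main :
    IntegrableOn (fun x : ℝ => _root_.arcosh (Real.cosh x / Real.sinh x))
      (Set.Ioi (Real.log (1 + Real.sqrt 2))) ∧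
    π ^ 2 = 4 * Real.log (1 + Real.sqrt 2) ^ 2
      + 8 * ∫ x in Set.Ioi (Real.log (1 + Real.sqrt 2)),
              _root_.arcosh (Real.cosh x / Real.sinh x) := by
  have hIa : (Set.Ioi (Real.log (1 + Real.sqrt 2))) = Set.Ioi a := rfl
  have hf : (fun x : ℝ => _root_.arcosh (Real.cosh x / Real.sinh x)) = f := rfl
  refine ⟨by rw [hIa, hf]; exact f_integrableOn_Ioia, ?_⟩
  have hsplit : ∫ x in Set.Ioi (0:ℝ), f x
      = (∫ x in Set.Ioc 0 a, f x) + ∫ x in Set.Ioi a, f x := by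
    rw [← Set.Ioc_union_Ioi_eq_Ioi a_pos.le]
    exact setIntegral_union (Set.Ioc_disjoint_Ioi le_rfl) measurableSet_Ioi
      (f_integrableOn_Ioi0.mono_set Set.Ioc_subset_Ioi_self) f_integrableOn_Ioia
  have hIocIoo : ∫ x in Set.Ioc (0:ℝ) a, f x = ∫ x in Set.Ioo (0:ℝ) a, f x :=
    MeasureTheory.integral_Ioc_eq_integral_Ioo
  have h1 := f_integral_Ioi0
  have h2 := layercake
  rw [hsplit, hIocIoo] at h1
  show π ^ 2 = 4 * a ^ 2 + 8 * ∫ x in Set.Ioi a, f x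
  nlinarith [h1, h2]

end PiSqAux

/-- π² = 4 ln²(1+√2) + 8 ∫_{ln(1+√2)}^∞ arccosh(coth x) dx, where coth x = cosh x/sinh x;
the improper integral converges. -/
theorem pi_sq_arcosh_coth :
    IntegrableOn (fun x : ℝ => _root_.arcosh (Real.cosh x / Real.sinh x))
      (Set.Ioi (Real.log (1 + Real.sqrt 2))) ∧
    π ^ 2 = 4 * Real.log (1 + Real.sqrt 2) ^ 2
      + 8 * ∫ x in Set.Ioi (Real.log (1 + Real.sqrt 2)),
              _root_.arcosh (Real.cosh x / Real.sinh x) :=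
  PiSqAux.main
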